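/- Let 0 < t < 1 be a real number. There exists a constant C > 0 depending only on t such that for every u > 0 and every v ∈ ℝ one has | |u + v|^t·(u + v) − u^{t+1} − (1 + t)·u^t·v | ≤ C · min{ u^{t−1}·v² , |v|^{t+1} }. -/
import Mathlib

open Real Set

-- MVT bound: for a,b ≥ c > 0, |b^t - a^t| ≤ t c^(t-1) |b-a|, 0<t<1
lemma aux1 {t : ℝ} (ht0 : 0 < t) (ht1 : t < 1) {c a b : ℝ} (hc : 0 < c)
    (ha : c ≤ a) (hb : c ≤ b) : |b ^ t - a ^ t| ≤ t * c ^ (t - 1) * |b - a| := by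
  have key := Convex.norm_image_sub_le_of_norm_hasDerivWithin_le
    (f := fun x : ℝ => x ^ t) (f' := fun x : ℝ => t * x ^ (t - 1))
    (s := Set.Ici c) (C := t * c ^ (t - 1))
    (fun x hx => (Real.hasDerivAt_rpow_const (p := t)
      (Or.inl (ne_of_gt (lt_of_lt_of_le hc hx)))).hasDerivWithinAt)
    (fun x hx => by
      have hx0 : 0 < x := lt_of_lt_of_le hc hx
      have h1 : x ^ (t - 1) ≤ c ^ (t - 1) :=
        Real.rpow_le_rpow_of_nonpos hc hx (by linarith)
      have h2 : 0 ≤ x ^ (t - 1) := (Real.rpow_pos_of_pos hx0 _).le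
      rw [Real.norm_eq_abs, abs_of_nonneg (by positivity)]
      exact mul_le_mul_of_nonneg_left h1 ht0.le)
    (convex_Ici c) ha hb
  simpa [Real.norm_eq_abs] using key

theorem stmt9 (t : ℝ) (ht0 : 0 < t) (ht1 : t < 1) :
    ∃ C > 0, ∀ u : ℝ, 0 < u → ∀ v : ℝ,
      |(|u + v|) ^ t * (u + v) - u ^ (t + 1) - (1 + t) * u ^ t * v| ≤
        C * min (u ^ (t - 1) * v ^ 2) (|v| ^ (t + 1)) := by
  refine ⟨40, by norm_num, fun u hu v => ?_⟩
  have h2 : (0:ℝ) < 2 := by norm_num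
  rcases eq_or_ne v 0 with rfl | hv0
  · rw [add_zero, abs_of_pos hu, mul_zero, sub_zero, Real.rpow_add_one hu.ne', sub_self,
      abs_zero]
    simp [Real.zero_rpow (show t + 1 ≠ 0 by linarith)]
  have hv : 0 < |v| := abs_pos.mpr hv0
  rcases le_or_gt (|v|) (u / 2) with hsmall | hbig
  · -- small v : |v| ≤ u/2
    have huv : 0 < u + v := by
      have := abs_le.mp (le_refl |v|) |>.1
      have := neg_abs_le v
      linarith
    have hc : (0:ℝ) < u / 2 := by linarith
    -- mean value theorem on F s = (u+s)^(t+1) - u^(t+1) - (1+t) u^t s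
    set F : ℝ → ℝ := fun s => (u + s) ^ (t + 1) - u ^ (t + 1) - (1 + t) * u ^ t * s with hF
    set M : ℝ := (1 + t) * (t * (u / 2) ^ (t - 1) * |v|) with hM
    have key : ∀ x ∈ Set.uIcc (0:ℝ) v, |x| ≤ |v| ∧ u / 2 ≤ u + x := by
      intro x hx
      rw [Set.mem_uIcc] at hx
      have hax : |x| ≤ |v| := by
        rcases hx with ⟨h1, h2⟩ | ⟨h1, h2⟩
        · rw [abs_of_nonneg h1]; exact le_trans h2 (le_abs_self v)
        · rw [abs_of_nonpos h2]; calc -x ≤ -v := by linarith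
            _ ≤ |v| := neg_le_abs v
      refine ⟨hax, ?_⟩
      have := neg_abs_le x
      linarith [abs_le.mp hax |>.1]
    have hderiv : ∀ x ∈ Set.uIcc (0:ℝ) v,
        HasDerivWithinAt F ((1 + t) * ((u + x) ^ t - u ^ t)) (Set.uIcc (0:ℝ) v) x := by
      intro x hx
      obtain ⟨_, hux⟩ := key x hx
      have hne : u + x ≠ 0 := by linarith
      have d1 : HasDerivAt (fun s : ℝ => u + s) 1 x := by
        simpa using (hasDerivAt_id x).const_add u
      have d2 : HasDerivAt (fun s : ℝ => (u + s) ^ (t + 1)) ((t + 1) * (u + x) ^ (t + 1 - 1) * 1) x :=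
        (Real.hasDerivAt_rpow_const (Or.inl hne)).comp x d1
      have d3 : HasDerivAt F ((t + 1) * (u + x) ^ (t + 1 - 1) * 1 - (1 + t) * u ^ t * 1) x := by
        rw [hF]
        exact (d2.sub_const (u ^ (t + 1))).sub ((hasDerivAt_id x).const_mul ((1 + t) * u ^ t))
      have : HasDerivAt F ((1 + t) * ((u + x) ^ t - u ^ t)) x := by
        convert d3 using 1
        rw [show t + 1 - 1 = t by ring]
        ring
      exact this.hasDerivWithinAt
    have hbound : ∀ x ∈ Set.uIcc (0:ℝ) v,
        ‖(1 + t) * ((u + x) ^ t - u ^ t)‖ ≤ M := by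
      intro x hx
      obtain ⟨hax, hux⟩ := key x hx
      have h1 : |(u + x) ^ t - u ^ t| ≤ t * (u / 2) ^ (t - 1) * |u + x - u| :=
        aux1 ht0 ht1 hc (by linarith) hux
      have h2 : |u + x - u| = |x| := by ring_nf
      rw [h2] at h1
      rw [Real.norm_eq_abs, abs_mul, abs_of_pos (by linarith : (0:ℝ) < 1 + t), hM]
      have hpos : (0:ℝ) ≤ t * (u / 2) ^ (t - 1) := by positivity
      have : t * (u / 2) ^ (t - 1) * |x| ≤ t * (u / 2) ^ (t - 1) * |v| :=
        mul_le_mul_of_nonneg_left hax hpos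
      nlinarith
    have mvt := (convex_uIcc (0:ℝ) v).norm_image_sub_le_of_norm_hasDerivWithin_le
      hderiv hbound Set.left_mem_uIcc Set.right_mem_uIcc
    simp only [Real.norm_eq_abs, sub_zero] at mvt
    have hF0 : F 0 = 0 := by simp [hF]
    rw [hF0, sub_zero] at mvt
    -- rewrite LHS as |F v|
    have hlhs : (|u + v|) ^ t * (u + v) - u ^ (t + 1) - (1 + t) * u ^ t * v = F v := by
      rw [hF]
      simp only [abs_of_pos huv]
      rw [Real.rpow_add_one (ne_of_gt huv)]
    rw [hlhs]
    -- bound M * |v|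
    have hhalf : (u / 2) ^ (t - 1) ≤ 2 * u ^ (t - 1) := by
      rw [Real.div_rpow hu.le h2.le]
      have hlow : (2:ℝ)⁻¹ ≤ 2 ^ (t - 1) := by
        have := Real.rpow_le_rpow_of_exponent_le (by norm_num : (1:ℝ) ≤ 2)
          (show (-1:ℝ) ≤ t - 1 by linarith)
        rwa [Real.rpow_neg_one] at this
      have hpow : (0:ℝ) < 2 ^ (t - 1) := Real.rpow_pos_of_pos h2 _
      have hupos : (0:ℝ) ≤ u ^ (t - 1) := (Real.rpow_pos_of_pos hu _).le
      rw [div_le_iff₀ hpow]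
      nlinarith
    have hMv : M * |v| ≤ 4 * (u ^ (t - 1) * v ^ 2) := by
      have hvv : |v| * |v| = v ^ 2 := by rw [← sq_abs]; ring
      have hup : (0:ℝ) ≤ u ^ (t - 1) := (Real.rpow_pos_of_pos hu _).le
      have hq : (0:ℝ) ≤ (u/2) ^ (t-1) := (Real.rpow_pos_of_pos hc _).le
      have ht2 : (1 + t) * t ≤ 2 := by nlinarith
      have hv2 : (0:ℝ) ≤ v ^ 2 := sq_nonneg v
      rw [hM, show (1 + t) * (t * (u / 2) ^ (t - 1) * |v|) * |v| =
        (1 + t) * t * ((u / 2) ^ (t - 1) * (|v| * |v|)) from by ring, hvv]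
      nlinarith [mul_le_mul_of_nonneg_right hhalf hv2,
        mul_le_mul_of_nonneg_right ht2 (mul_nonneg hq hv2)]
    -- min equals u^(t-1) v^2
    have hminle : u ^ (t - 1) * v ^ 2 ≤ |v| ^ (t + 1) := by
      have h1 : u ^ (t - 1) ≤ |v| ^ (t - 1) :=
        Real.rpow_le_rpow_of_nonpos hv (by linarith) (by linarith)
      have h2' : |v| ^ (t + 1) = |v| ^ (t - 1) * v ^ 2 := by
        rw [show t + 1 = (t - 1) + 2 by ring, Real.rpow_add hv,
          show ((2:ℝ)) = ((2:ℕ):ℝ) by norm_num, Real.rpow_natCast, sq_abs]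
      rw [h2']
      exact mul_le_mul_of_nonneg_right h1 (sq_nonneg v)
    rw [min_eq_left hminle]
    have hmin0 : (0:ℝ) ≤ u ^ (t - 1) * v ^ 2 := by positivity
    calc |F v| ≤ M * |v| := mvt
      _ ≤ 4 * (u ^ (t - 1) * v ^ 2) := hMv
      _ ≤ 40 * (u ^ (t - 1) * v ^ 2) := by nlinarith
  · -- big v : u/2 < |v|
    have hu2v : u ≤ 2 * |v| := by linarith
    set A : ℝ := |v| ^ (t + 1) with hA
    have hApos : 0 < A := Real.rpow_pos_of_pos hv _
    -- LHS ≤ 17 A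
    have habs1 : |(|u + v|) ^ t * (u + v)| = |u + v| ^ (t + 1) := by
      rw [abs_mul, abs_of_nonneg (Real.rpow_nonneg (abs_nonneg _) t),
        Real.rpow_add' (abs_nonneg _) (by linarith : t + 1 ≠ 0), Real.rpow_one]
    have h3v : |u + v| ≤ 3 * |v| := by
      calc |u + v| ≤ |u| + |v| := abs_add_le u v
        _ ≤ 3 * |v| := by rw [abs_of_pos hu]; linarith
    have b1 : |u + v| ^ (t + 1) ≤ 9 * A := by
      have h := Real.rpow_le_rpow (abs_nonneg _) h3v (by linarith : (0:ℝ) ≤ t + 1)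
      rw [Real.mul_rpow (by norm_num) (abs_nonneg v)] at h
      have h9 : (3:ℝ) ^ (t + 1) ≤ 9 := by
        calc (3:ℝ) ^ (t + 1) ≤ 3 ^ (2:ℝ) :=
              Real.rpow_le_rpow_of_exponent_le (by norm_num) (by linarith)
          _ = 9 := by
              rw [show ((2:ℝ)) = ((2:ℕ):ℝ) by norm_num, Real.rpow_natCast]; norm_num
      nlinarith [hApos.le]
    have b2 : u ^ (t + 1) ≤ 4 * A := by
      have h := Real.rpow_le_rpow hu.le hu2v (by linarith : (0:ℝ) ≤ t + 1)
      rw [Real.mul_rpow h2.le (abs_nonneg v)] at h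
      have h4 : (2:ℝ) ^ (t + 1) ≤ 4 := by
        calc (2:ℝ) ^ (t + 1) ≤ 2 ^ (2:ℝ) :=
              Real.rpow_le_rpow_of_exponent_le (by norm_num) (by linarith)
          _ = 4 := by
              rw [show ((2:ℝ)) = ((2:ℕ):ℝ) by norm_num, Real.rpow_natCast]; norm_num
      nlinarith [hApos.le]
    have b3 : (1 + t) * u ^ t * |v| ≤ 4 * A := by
      have h := Real.rpow_le_rpow hu.le hu2v ht0.le
      rw [Real.mul_rpow h2.le (abs_nonneg v)] at h
      have h2t : (2:ℝ) ^ t ≤ 2 := by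
        have := Real.rpow_le_rpow_of_exponent_le (by norm_num : (1:ℝ) ≤ 2) ht1.le
        rwa [Real.rpow_one] at this
      have hvt : |v| ^ t * |v| = A := by
        rw [hA, Real.rpow_add_one (ne_of_gt hv)]
      have hvt0 : (0:ℝ) < |v| ^ t := Real.rpow_pos_of_pos hv t
      have k1 : u ^ t * |v| ≤ 2 * A := by
        have := mul_le_mul_of_nonneg_right h (abs_nonneg v)
        rw [mul_assoc, hvt] at this
        nlinarith [hApos.le]
      have k2 : (0:ℝ) ≤ u ^ t * |v| := by positivity
      calc (1 + t) * u ^ t * |v| = (1 + t) * (u ^ t * |v|) := by ring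
        _ ≤ 2 * (2 * A) := mul_le_mul (by linarith) k1 k2 (by norm_num)
        _ = 4 * A := by ring
    have hlhs : |(|u + v|) ^ t * (u + v) - u ^ (t + 1) - (1 + t) * u ^ t * v| ≤ 17 * A := by
      have e1 := abs_sub (((|u + v|) ^ t * (u + v)) - u ^ (t + 1)) ((1 + t) * u ^ t * v)
      have e2 := abs_sub ((|u + v|) ^ t * (u + v)) (u ^ (t + 1))
      have e3 : |(1 + t) * u ^ t * v| = (1 + t) * u ^ t * |v| := by
        rw [abs_mul, abs_of_pos (by positivity : (0:ℝ) < (1 + t) * u ^ t)]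
      have e4 : |u ^ (t + 1)| = u ^ (t + 1) :=
        abs_of_pos (Real.rpow_pos_of_pos hu _)
      rw [habs1] at e2
      rw [e3] at e1
      rw [e4] at e2
      linarith
    -- min ≥ A/2
    have hmin : A / 2 ≤ min (u ^ (t - 1) * v ^ 2) A := by
      refine le_min ?_ (by linarith)
      have h1 : (2 * |v|) ^ (t - 1) ≤ u ^ (t - 1) :=
        Real.rpow_le_rpow_of_nonpos hu hu2v (by linarith)
      rw [Real.mul_rpow h2.le (abs_nonneg v)] at h1
      have hlow : (2:ℝ)⁻¹ ≤ 2 ^ (t - 1) := by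
        have := Real.rpow_le_rpow_of_exponent_le (by norm_num : (1:ℝ) ≤ 2)
          (show (-1:ℝ) ≤ t - 1 by linarith)
        rwa [Real.rpow_neg_one] at this
      have hAeq : A = |v| ^ (t - 1) * v ^ 2 := by
        rw [hA, show t + 1 = (t - 1) + 2 by ring, Real.rpow_add hv,
          show ((2:ℝ)) = ((2:ℕ):ℝ) by norm_num, Real.rpow_natCast, sq_abs]
      have hvt1 : (0:ℝ) < |v| ^ (t - 1) := Real.rpow_pos_of_pos hv _
      rw [hAeq]
      nlinarith [sq_nonneg v, mul_le_mul_of_nonneg_right h1 (sq_nonneg v)]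
    calc |(|u + v|) ^ t * (u + v) - u ^ (t + 1) - (1 + t) * u ^ t * v| ≤ 17 * A := hlhs
      _ ≤ 40 * (A / 2) := by linarith
      _ ≤ 40 * min (u ^ (t - 1) * v ^ 2) A := by linarith
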